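/- For every n ≥ 1 and every probability distribution p = (p_1, ..., p_n) with p_1 ≥ ... ≥ p_n > 0 and Σ p_i = 1, the guessing entropy satisfies E[G(p)] ≥ (1/e)·2^{H(p) + p_n} - p_n/2 + 1/2. -/

import Mathlib

/-- Shannon entropy in bits. -/
noncomputable def shannonEntropy {n : ℕ} (p : Fin n → ℝ) : ℝ :=
  -∑ i, p i * Real.logb 2 (p i)

/-- Guessing entropy: expected number of guesses (indices counted from 1). -/
noncomputable def guessingEntropy {n : ℕ} (p : Fin n → ℝ) : ℝ :=
  ∑ i : Fin n, (((i : ℕ) : ℝ) + 1) * p i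

/-- Binary entropy function (in bits). -/
noncomputable def binaryEntropy (α : ℝ) : ℝ :=
  -α * Real.logb 2 α - (1 - α) * Real.logb 2 (1 - α)

/-- Key elementary inequality: `l * exp(-l/2) ≤ 1 - exp(-l)` for `l > 0`. -/
lemma aux_sinh {l : ℝ} (hl : 0 < l) : l * Real.exp (-(l/2)) ≤ 1 - Real.exp (-l) := by
  have h := (Real.self_lt_sinh_iff (x := l/2)).2 (by linarith)
  rw [Real.sinh_eq] at h
  have he : 0 < Real.exp (-(l/2)) := Real.exp_pos _
  have h2 : l ≤ Real.exp (l/2) - Real.exp (-(l/2)) := by linarith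
  have h3 := mul_le_mul_of_nonneg_right h2 he.le
  have e1 : Real.exp (l/2) * Real.exp (-(l/2)) = 1 := by
    rw [← Real.exp_add]; norm_num
  have e2 : Real.exp (-(l/2)) * Real.exp (-(l/2)) = Real.exp (-l) := by
    rw [← Real.exp_add]; ring_nf
  nlinarith

/-- Maximum-entropy (Gibbs) bound: for any probability vector `q`,
the Shannon entropy in nats is at most `1 + log (∑ (i + 1/2) q i)`. -/
lemma core {k : ℕ} (q : Fin k → ℝ) (hpos : ∀ i, 0 < q i) (hsum : ∑ i, q i = 1) :
    -∑ i, q i * Real.log (q i) ≤ 1 + Real.log (∑ i, ((i.1 : ℝ) + 1/2) * q i) := by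
  set M := ∑ i, ((i.1 : ℝ) + 1/2) * q i with hMdef
  have hM2 : (1:ℝ)/2 ≤ M := by
    have : ∑ i, (1/2 : ℝ) * q i ≤ M := by
      apply Finset.sum_le_sum
      intro i _
      have := hpos i
      have : (0:ℝ) ≤ ((i : ℕ) : ℝ) := Nat.cast_nonneg _
      nlinarith [hpos i]
    rwa [← Finset.mul_sum, hsum, mul_one] at this
  have hMpos : 0 < M := by linarith
  set l := 1/M with hldef
  have hlpos : 0 < l := by positivity
  set r : Fin k → ℝ := fun i => l * Real.exp (-(l * ((i.1 : ℝ) + 1/2))) with hrdef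
  have hrpos : ∀ i, 0 < r i := fun i => by positivity
  -- pointwise Gibbs
  have h1 : ∀ i : Fin k, q i * (Real.log (r i) - Real.log (q i)) ≤ r i - q i := by
    intro i
    have hq := hpos i
    have h := Real.log_le_sub_one_of_pos (show 0 < r i / q i by positivity)
    rw [Real.log_div (hrpos i).ne' hq.ne'] at h
    have h2 := mul_le_mul_of_nonneg_left h hq.le
    calc q i * (Real.log (r i) - Real.log (q i)) ≤ q i * (r i / q i - 1) := h2
      _ = r i - q i := by field_simp
  -- sum of r is at most 1
  have hsumr : ∑ i, r i ≤ 1 := by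
    have hx0 : 0 < Real.exp (-l) := Real.exp_pos _
    have hx1 : Real.exp (-l) < 1 := by
      rw [Real.exp_lt_one_iff]; linarith
    have hrw : ∀ i : Fin k, r i = (l * Real.exp (-(l/2))) * (Real.exp (-l)) ^ (i : ℕ) := by
      intro i
      rw [hrdef]
      have : Real.exp (-l) ^ (i : ℕ) = Real.exp ((-l) * (i : ℕ)) := by
        rw [← Real.exp_nat_mul]; ring_nf
      rw [this, mul_assoc, ← Real.exp_add]
      ring_nf
    calc ∑ i, r i = (l * Real.exp (-(l/2))) * ∑ i : Fin k, (Real.exp (-l)) ^ (i : ℕ) := by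
          rw [Finset.mul_sum]; exact Finset.sum_congr rfl fun i _ => hrw i
      _ ≤ (1 - Real.exp (-l)) * ∑ i : Fin k, (Real.exp (-l)) ^ (i : ℕ) := by
          apply mul_le_mul_of_nonneg_right (aux_sinh hlpos)
          exact Finset.sum_nonneg fun i _ => pow_nonneg hx0.le _
      _ ≤ 1 := by
          rw [Fin.sum_univ_eq_sum_range, geom_sum_eq hx1.ne]
          have hpk : (0:ℝ) ≤ Real.exp (-l) ^ k := pow_nonneg hx0.le _
          have hne : Real.exp (-l) - 1 ≠ 0 := by
            intro h
            have : Real.exp (-l) = 1 := by linarith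
            rw [this] at hx1; linarith
          have : (1 - Real.exp (-l)) * ((Real.exp (-l) ^ k - 1) / (Real.exp (-l) - 1))
              = 1 - Real.exp (-l) ^ k := by
            field_simp
            ring
          rw [this]; linarith
  -- cross entropy computation
  have hcross : -∑ i, q i * Real.log (r i) = 1 + Real.log M := by
    have hlr : ∀ i : Fin k, Real.log (r i) = Real.log l - l * ((i.1 : ℝ) + 1/2) := by
      intro i
      rw [hrdef]
      simp [Real.log_mul hlpos.ne' (Real.exp_ne_zero _), Real.log_exp]
      ring
    have : ∑ i, q i * Real.log (r i)
        = (Real.log l) * ∑ i, q i - l * ∑ i, ((i.1 : ℝ) + 1/2) * q i := by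
      rw [Finset.mul_sum, Finset.mul_sum, ← Finset.sum_sub_distrib]
      exact Finset.sum_congr rfl fun i _ => by rw [hlr i]; ring
    rw [this, hsum, ← hMdef, hldef]
    rw [Real.log_div one_ne_zero hMpos.ne', Real.log_one]
    field_simp
    ring
  -- combine
  have hsum1 : ∑ i, q i * (Real.log (r i) - Real.log (q i)) ≤ 0 := by
    calc ∑ i, q i * (Real.log (r i) - Real.log (q i)) ≤ ∑ i, (r i - q i) :=
          Finset.sum_le_sum fun i _ => h1 i
      _ = (∑ i, r i) - ∑ i, q i := Finset.sum_sub_distrib _ _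
      _ ≤ 0 := by rw [hsum]; linarith
  have hexpand : ∑ i, q i * (Real.log (r i) - Real.log (q i))
      = (∑ i, q i * Real.log (r i)) - ∑ i, q i * Real.log (q i) := by
    rw [← Finset.sum_sub_distrib]
    exact Finset.sum_congr rfl fun i _ => by ring
  have := hcross
  linarith [hsum1, hexpand.symm.le, hexpand.le]

theorem refined_rioul_half (n : ℕ) (hn : 1 ≤ n) (p : Fin n → ℝ)
    (hdesc : ∀ i j : Fin n, i ≤ j → p j ≤ p i)
    (hpos : ∀ i, 0 < p i)
    (hsum : ∑ i, p i = 1) :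
    guessingEntropy p ≥
      (1 / Real.exp 1) * (2 : ℝ) ^ (shannonEntropy p + p ⟨n - 1, by omega⟩) -
        p ⟨n - 1, by omega⟩ / 2 + 1 / 2 := by
  obtain ⟨m, rfl⟩ : ∃ m, n = m + 1 := ⟨n - 1, by omega⟩
  have hlastidx : (⟨m + 1 - 1, by omega⟩ : Fin (m+1)) = Fin.last m := rfl
  rw [hlastidx]
  set t := p (Fin.last m) with htdef
  have htpos : 0 < t := hpos _
  -- the split distribution on Fin (m+2)
  set q : Fin (m+2) → ℝ := Fin.snoc (Function.update p (Fin.last m) (t/2)) (t/2) with hqdef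
  have hqpos : ∀ i, 0 < q i := by
    intro i
    rw [hqdef]
    refine Fin.lastCases ?_ ?_ i
    · simp [Fin.snoc_last]; positivity
    · intro j
      rw [Fin.snoc_castSucc]
      rcases eq_or_ne j (Fin.last m) with h | h
      · rw [h, Function.update_self]; positivity
      · rw [Function.update_of_ne h]; exact hpos j
  -- generic sum identity for functions of the form F i (q i)
  have hsplit : ∀ F : ℕ → ℝ → ℝ,
      (∑ i : Fin (m+2), F (i : ℕ) (q i))
        = (∑ i : Fin (m+1), F (i : ℕ) (p i)) - F m t + F m (t/2) + F (m+1) (t/2) := by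
    intro F
    rw [Fin.sum_univ_castSucc (n := m+1)]
    have h1 : ∀ i : Fin (m+1), q (Fin.castSucc i) = Function.update p (Fin.last m) (t/2) i := by
      intro i; rw [hqdef, Fin.snoc_castSucc]
    have h2 : q (Fin.last (m+1)) = t/2 := by rw [hqdef, Fin.snoc_last]
    have h3 : (∑ i : Fin (m+1), F (i : ℕ) (Function.update p (Fin.last m) (t/2) i))
        = (∑ i : Fin (m+1), F (i : ℕ) (p i)) - F m t + F m (t/2) := by
      rw [Fin.sum_univ_castSucc (n := m), Fin.sum_univ_castSucc (n := m)]
      have hne : ∀ i : Fin m, Fin.castSucc i ≠ Fin.last m :=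
        fun i => (Fin.castSucc_lt_last i).ne
      have : ∀ i : Fin m, Function.update p (Fin.last m) (t/2) (Fin.castSucc i)
          = p (Fin.castSucc i) := fun i => Function.update_of_ne (hne i) _ _
      simp only [this, Function.update_self, Fin.val_last]
      ring
    calc (∑ i : Fin (m+1), F ((Fin.castSucc i : Fin (m+2)) : ℕ) (q (Fin.castSucc i)))
          + F ((Fin.last (m+1) : Fin (m+2)) : ℕ) (q (Fin.last (m+1)))
        = (∑ i : Fin (m+1), F (i : ℕ) (Function.update p (Fin.last m) (t/2) i)) + F (m+1) (t/2) := by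
          rw [h2]
          congr 1
          exact Finset.sum_congr rfl fun i _ => by rw [h1 i, Fin.coe_castSucc]
      _ = (∑ i : Fin (m+1), F (i : ℕ) (p i)) - F m t + F m (t/2) + F (m+1) (t/2) := by
          rw [h3]
  -- q is a probability distribution
  have hqsum : ∑ i, q i = 1 := by
    have := hsplit (fun _ x => x)
    rw [this, hsum]; ring
  -- apply the core bound to q
  have hcore := core q hqpos hqsum
  -- identity for the entropy sums
  have hent : (∑ i : Fin (m+2), q i * Real.log (q i))
      = (∑ i : Fin (m+1), p i * Real.log (p i)) - t * Real.log 2 := by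
    have := hsplit (fun _ x => x * Real.log x)
    rw [this]
    have hlog : Real.log (t/2) = Real.log t - Real.log 2 := by
      rw [Real.log_div htpos.ne' two_ne_zero]
    rw [hlog]
    ring
  -- identity for the mean sums
  have hmean : (∑ i : Fin (m+2), ((i.1 : ℝ) + 1/2) * q i)
      = (∑ i : Fin (m+1), ((i.1 : ℝ) + 1) * p i) - 1/2 + t/2 := by
    have := hsplit (fun j x => ((j : ℝ) + 1/2) * x)
    rw [this]
    have : (∑ i : Fin (m+1), ((i.1 : ℝ) + 1/2) * p i)
        = (∑ i : Fin (m+1), ((i.1 : ℝ) + 1) * p i) - (1/2) * ∑ i : Fin (m+1), p i := by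
      rw [Finset.mul_sum, ← Finset.sum_sub_distrib]
      exact Finset.sum_congr rfl fun i _ => by ring
    rw [this, hsum]
    push_cast
    ring
  set G := guessingEntropy p with hGdef
  have hGsum : G = ∑ i : Fin (m+1), ((i.1 : ℝ) + 1) * p i := rfl
  -- the mean M of q is G - 1/2 + t/2 and is at least 1/2
  have hMval : (∑ i : Fin (m+2), ((i.1 : ℝ) + 1/2) * q i) = G - 1/2 + t/2 := by
    rw [hmean, hGsum]
  have hMhalf : (1:ℝ)/2 ≤ G - 1/2 + t/2 := by
    rw [← hMval]
    have : ∑ i : Fin (m+2), (1/2 : ℝ) * q i ≤ ∑ i : Fin (m+2), ((i.1 : ℝ) + 1/2) * q i := by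
      apply Finset.sum_le_sum
      intro i _
      have h1 := hqpos i
      have h2 : (0:ℝ) ≤ ((i : ℕ) : ℝ) := Nat.cast_nonneg _
      nlinarith
    rwa [← Finset.mul_sum, hqsum, mul_one] at this
  have hMpos : 0 < G - 1/2 + t/2 := by linarith
  -- translate the core bound
  rw [hent, hMval] at hcore
  -- hcore : -(∑ p log p - t log 2) ≤ 1 + log (G - 1/2 + t/2)
  -- now express shannonEntropy in terms of natural logs
  have hH : shannonEntropy p * Real.log 2 = -∑ i : Fin (m+1), p i * Real.log (p i) := by
    rw [shannonEntropy, neg_mul, Finset.sum_mul, neg_inj]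
    apply Finset.sum_congr rfl
    intro i _
    have hl2 : Real.log 2 ≠ 0 := by
      have : (0:ℝ) < Real.log 2 := Real.log_pos (by norm_num)
      linarith
    rw [Real.logb]
    field_simp
  have hlog2pos : (0:ℝ) < Real.log 2 := Real.log_pos (by norm_num)
  -- exponentiate: 2 ^ (H + t) ≤ e * (G - 1/2 + t/2)
  have hrpow : (2:ℝ) ^ (shannonEntropy p + t) = Real.exp ((shannonEntropy p + t) * Real.log 2) := by
    rw [Real.rpow_def_of_pos (by norm_num : (0:ℝ) < 2)]
    ring_nf
  have hexp_le : (2:ℝ) ^ (shannonEntropy p + t) ≤ Real.exp 1 * (G - 1/2 + t/2) := by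
    rw [hrpow]
    have harg : (shannonEntropy p + t) * Real.log 2 ≤ 1 + Real.log (G - 1/2 + t/2) := by
      have : (shannonEntropy p + t) * Real.log 2
          = shannonEntropy p * Real.log 2 + t * Real.log 2 := by ring
      rw [this, hH]
      linarith [hcore]
    calc Real.exp ((shannonEntropy p + t) * Real.log 2)
        ≤ Real.exp (1 + Real.log (G - 1/2 + t/2)) := Real.exp_le_exp.2 harg
      _ = Real.exp 1 * (G - 1/2 + t/2) := by
          rw [Real.exp_add, Real.exp_log hMpos]
  -- finish
  have hepos : 0 < Real.exp 1 := Real.exp_pos 1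
  rw [ge_iff_le]
  have h1 : (1 / Real.exp 1) * ((2:ℝ) ^ (shannonEntropy p + t)) ≤ G - 1/2 + t/2 := by
    have h2 := mul_le_mul_of_nonneg_left hexp_le
      (by positivity : (0:ℝ) ≤ 1 / Real.exp 1)
    calc (1 / Real.exp 1) * ((2:ℝ) ^ (shannonEntropy p + t))
        ≤ (1 / Real.exp 1) * (Real.exp 1 * (G - 1/2 + t/2)) := h2
      _ = G - 1/2 + t/2 := by field_simp
  linarith
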